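/- Under the hypotheses of the previous statement, suppose additionally that the prior p satisfies c₂ ≤ p(θ) ≤ c₁ on Θ with 0 < c₂ ≤ c₁, and define the posterior p_N(θ) = e^{N φ_N(θ)} p(θ) / ∫_Θ e^{N φ_N(θ')} p(θ') dθ'. Let κ(β) = Leb(U_{β/2}) > 0. Then for all sufficiently large N, sup_{θ ∈ V_ε} p_N(θ) ≤ κ(β)^{-1} (c₁/c₂)² e^{−N(α−β)} · (c₂/c₁) ≤ κ(β)^{-1} (c₁/c₂)² e^{−N(α−β)}. -/

import Mathlib

open Filter MeasureTheory

/-- Lemma 3.2: exponential decay of the posterior density away from the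
maximizer set. -/
theorem stmt8 {d : ℕ} (Θ : Set (Fin d → ℝ)) (hΘ : IsCompact Θ) (hΘm : MeasurableSet Θ)
    (φ : ℕ → (Fin d → ℝ) → ℝ) (ψ : (Fin d → ℝ) → ℝ) (hψ : ContinuousOn ψ Θ)
    (hconv : ∀ ε' > (0 : ℝ), ∀ᶠ N in atTop, ∀ θ ∈ Θ, |φ N θ - ψ θ| ≤ ε')
    (θstar : Fin d → ℝ) (hθΘ : θstar ∈ Θ) (hmax : ∀ θ ∈ Θ, ψ θ ≤ ψ θstar)
    (ε α β : ℝ) (hβ : 0 < β) (hβα : β < α) (hαε : α < ε)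
    (p : (Fin d → ℝ) → ℝ) (c₁ c₂ : ℝ) (hc₂ : 0 < c₂) (hc : c₂ ≤ c₁)
    (hprior : ∀ θ ∈ Θ, c₂ ≤ p θ ∧ p θ ≤ c₁)
    (pN : ℕ → (Fin d → ℝ) → ℝ)
    (hpN : ∀ (N : ℕ) (θ : Fin d → ℝ), pN N θ =
      Real.exp ((N : ℝ) * φ N θ) * p θ /
        ∫ θ' in Θ, Real.exp ((N : ℝ) * φ N θ') * p θ')
    (hden : ∀ N : ℕ, 0 < ∫ θ' in Θ, Real.exp ((N : ℝ) * φ N θ') * p θ')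
    (κ : ℝ) (hκ : κ = (volume {θ ∈ Θ | ψ θstar - ψ θ < β / 2}).toReal) (hκpos : 0 < κ) :
    ∀ᶠ N in atTop, ∀ θ ∈ {θ ∈ Θ | ε ≤ ψ θstar - ψ θ},
      pN N θ ≤ κ⁻¹ * (c₁ / c₂) ^ 2 * Real.exp (-(N : ℝ) * (α - β)) * (c₂ / c₁) ∧
      κ⁻¹ * (c₁ / c₂) ^ 2 * Real.exp (-(N : ℝ) * (α - β)) * (c₂ / c₁) ≤
        κ⁻¹ * (c₁ / c₂) ^ 2 * Real.exp (-(N : ℝ) * (α - β)) := by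
  have hc₁ : 0 < c₁ := lt_of_lt_of_le hc₂ hc
  set δ : ℝ := (ε - α + β / 2) / 2 with hδdef
  have hδ : 0 < δ := by
    have : 0 < ε - α := by linarith
    have : 0 < ε - α + β / 2 := by linarith
    simp only [hδdef]; linarith
  -- the set U
  set U : Set (Fin d → ℝ) := {θ ∈ Θ | ψ θstar - ψ θ < β / 2} with hUdef
  have hsub : U ⊆ Θ := fun x hx => hx.1
  have hUm : MeasurableSet U := by
    have hclosed : IsClosed (Θ ∩ ψ ⁻¹' Set.Iic (ψ θstar - β / 2)) :=
      hψ.preimage_isClosed_of_isClosed hΘ.isClosed isClosed_Iic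
    have : U = Θ \ (Θ ∩ ψ ⁻¹' Set.Iic (ψ θstar - β / 2)) := by
      ext x
      simp only [hUdef, Set.mem_setOf_eq, Set.mem_diff, Set.mem_inter_iff, Set.mem_preimage,
        Set.mem_Iic]
      constructor
      · rintro ⟨hx, hlt⟩
        exact ⟨hx, fun h => by linarith [h.2]⟩
      · rintro ⟨hx, h⟩
        refine ⟨hx, ?_⟩
        by_contra hcon
        exact h ⟨hx, by linarith⟩
    rw [this]
    exact hΘm.diff hclosed.measurableSet
  have hUfin : volume U ≠ ⊤ :=
    ne_of_lt (lt_of_le_of_lt (measure_mono hsub) hΘ.measure_lt_top)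
  have hUvol : (volume U).toReal = κ := hκ.symm
  filter_upwards [hconv δ hδ] with N hN θ hθ
  obtain ⟨hθΘ', hθV⟩ := hθ
  set f : (Fin d → ℝ) → ℝ := fun θ' => Real.exp ((N : ℝ) * φ N θ') * p θ' with hfdef
  have hInt : IntegrableOn f Θ := by
    by_contra h
    have := MeasureTheory.integral_undef h
    have hd := hden N
    rw [this] at hd
    exact lt_irrefl 0 hd
  have hNnn : (0 : ℝ) ≤ (N : ℝ) := Nat.cast_nonneg N
  -- lower bound on the denominator
  set L : ℝ := c₂ * Real.exp ((N : ℝ) * (ψ θstar - β / 2 - δ)) with hLdef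
  have hLpos : 0 < L := by positivity
  have hfnonneg : 0 ≤ᵐ[volume.restrict Θ] f := by
    filter_upwards [ae_restrict_mem hΘm] with x hx
    have := (hprior x hx).1
    have : 0 ≤ p x := le_trans hc₂.le this
    positivity
  have h1 : ∫ θ' in U, f θ' ≤ ∫ θ' in Θ, f θ' :=
    MeasureTheory.setIntegral_mono_set hInt hfnonneg (HasSubset.Subset.eventuallyLE hsub)
  have h2 : L * (volume U).toReal ≤ ∫ θ' in U, f θ' := by
    rw [mul_comm, ← smul_eq_mul]
    refine MeasureTheory.setIntegral_ge_of_const_le hUm hUfin ?_ (hInt.mono_set hsub)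
    intro x hx
    obtain ⟨hxΘ, hxlt⟩ := hx
    have hφ : ψ θstar - β / 2 - δ ≤ φ N x := by
      have := hN x hxΘ
      have := abs_le.mp this
      linarith [this.1]
    have hexp : Real.exp ((N : ℝ) * (ψ θstar - β / 2 - δ)) ≤ Real.exp ((N : ℝ) * φ N x) :=
      Real.exp_le_exp.mpr (mul_le_mul_of_nonneg_left hφ hNnn)
    have hp := (hprior x hxΘ).1
    calc L = c₂ * Real.exp ((N : ℝ) * (ψ θstar - β / 2 - δ)) := rfl
      _ ≤ Real.exp ((N : ℝ) * φ N x) * p x := by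
          rw [mul_comm]
          exact mul_le_mul hexp hp hc₂.le (Real.exp_pos _).le
  have hdenL : L * κ ≤ ∫ θ' in Θ, f θ' := by
    rw [← hUvol]; exact le_trans h2 h1
  -- upper bound on the numerator
  set B : ℝ := c₁ * Real.exp ((N : ℝ) * (ψ θstar - ε + δ)) with hBdef
  have hnum : f θ ≤ B := by
    have hφ : φ N θ ≤ ψ θstar - ε + δ := by
      have h1 := abs_le.mp (hN θ hθΘ')
      linarith [h1.2]
    have hexp : Real.exp ((N : ℝ) * φ N θ) ≤ Real.exp ((N : ℝ) * (ψ θstar - ε + δ)) :=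
      Real.exp_le_exp.mpr (mul_le_mul_of_nonneg_left hφ hNnn)
    have hp := (hprior θ hθΘ').2
    have hp0 : 0 ≤ p θ := le_trans hc₂.le (hprior θ hθΘ').1
    calc f θ = Real.exp ((N : ℝ) * φ N θ) * p θ := rfl
      _ ≤ Real.exp ((N : ℝ) * (ψ θstar - ε + δ)) * c₁ := mul_le_mul hexp hp hp0 (Real.exp_pos _).le
      _ = B := by rw [hBdef]; ring
  have hf0 : 0 ≤ f θ := by
    have hp0 : 0 ≤ p θ := le_trans hc₂.le (hprior θ hθΘ').1
    positivity
  have hBnn : 0 ≤ B := le_trans hf0 hnum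
  have hLκ : 0 < L * κ := mul_pos hLpos hκpos
  have hmain : pN N θ ≤ B / (L * κ) := by
    rw [hpN]
    exact div_le_div₀ hBnn hnum hLκ hdenL
  have hEeq : Real.exp ((N : ℝ) * (ψ θstar - ε + δ)) =
      Real.exp (-(N : ℝ) * (α - β)) * Real.exp ((N : ℝ) * (ψ θstar - β / 2 - δ)) := by
    rw [← Real.exp_add]
    congr 1
    simp only [hδdef]
    ring
  have heq : B / (L * κ) = κ⁻¹ * (c₁ / c₂) ^ 2 * Real.exp (-(N : ℝ) * (α - β)) * (c₂ / c₁) := by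
    rw [hBdef, hLdef, hEeq]
    field_simp
  refine ⟨heq ▸ hmain, ?_⟩
  have h1 : c₂ / c₁ ≤ 1 := div_le_one_of_le₀ hc hc₁.le
  exact mul_le_of_le_one_right (by positivity) h1
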